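/- Player 1 has a winning strategy in Trail Trap on the complete graph K₄. -/

import Mathlib

open SimpleGraph

/-- A valid partial play of Trail Trap: a list of moves (directed edges), where each
move is along an edge of `G`, no edge (as an unordered pair) is used twice, and each
player's moves form a trail (move `i+2` starts where move `i` ended). Moves at even
indices belong to Player 1 and moves at odd indices to Player 2. -/
def ValidPlay {V : Type*} (G : SimpleGraph V) (l : List (V × V)) : Prop :=
  (∀ m ∈ l, G.Adj m.1 m.2) ∧
  (l.map (fun m => s(m.1, m.2))).Nodup ∧
  ∀ (i : ℕ) (h : i + 2 < l.length),
    (l.get ⟨i + 2, h⟩).1 = (l.get ⟨i, by omega⟩).2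

/-- The play `l` follows strategy `σ` on all turns with index `≡ t (mod 2)`. -/
def FollowsAt {V : Type*} (σ : List (V × V) → V × V) (t : ℕ) (l : List (V × V)) : Prop :=
  ∀ (i : ℕ) (h : i < l.length), i % 2 = t → l.get ⟨i, h⟩ = σ (l.take i)

/-- Player 1 has a winning strategy in Trail Trap on `G`: a strategy `σ` for the
even-indexed moves such that every `σ`-consistent valid play that cannot be
`σ`-consistently extended has odd length (i.e. Player 2 is the one stuck). -/
def P1Win {V : Type*} (G : SimpleGraph V) : Prop :=
  ∃ σ : List (V × V) → V × V, ∀ l : List (V × V),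
    ValidPlay G l → FollowsAt σ 0 l →
    (∀ m : V × V, ¬ (ValidPlay G (l ++ [m]) ∧ FollowsAt σ 0 (l ++ [m]))) →
    l.length % 2 = 1

/-- Player 2 has a winning strategy in Trail Trap on `G`. -/
def P2Win {V : Type*} (G : SimpleGraph V) : Prop :=
  ∃ σ : List (V × V) → V × V, ∀ l : List (V × V),
    ValidPlay G l → FollowsAt σ 1 l →
    (∀ m : V × V, ¬ (ValidPlay G (l ++ [m]) ∧ FollowsAt σ 1 (l ++ [m]))) →
    l.length % 2 = 0

/-- Player 1 has a winning strategy in Trail Trap on `G` whose first move is `u → v`. -/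
def P1WinFrom {V : Type*} (G : SimpleGraph V) (u v : V) : Prop :=
  ∃ σ : List (V × V) → V × V, σ [] = (u, v) ∧ ∀ l : List (V × V),
    ValidPlay G l → FollowsAt σ 0 l →
    (∀ m : V × V, ¬ (ValidPlay G (l ++ [m]) ∧ FollowsAt σ 0 (l ++ [m]))) →
    l.length % 2 = 1

/-- Player 2 has a winning strategy in Trail Trap on `G`, given that Player 1's first
move was `u → v`. -/
def P2WinAfter {V : Type*} (G : SimpleGraph V) (u v : V) : Prop :=
  ∃ σ : List (V × V) → V × V, ∀ l : List (V × V),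
    l.head? = some (u, v) → ValidPlay G l → FollowsAt σ 1 l →
    (∀ m : V × V, ¬ (ValidPlay G (l ++ [m]) ∧ FollowsAt σ 1 (l ++ [m]))) →
    l.length % 2 = 0

/-- Player 1 has a winning strategy in Trail Trap on the complete graph `K₄`. -/

abbrev M4 := Fin 4 × Fin 4

def movesList : List M4 :=
  [(0,1),(0,2),(0,3),(1,0),(1,2),(1,3),(2,0),(2,1),(2,3),(3,0),(3,1),(3,2)]

def edgeNe (x y : M4) : Prop := ¬(x = y ∨ (x.1 = y.2 ∧ x.2 = y.1))

instance (x y : M4) : Decidable (edgeNe x y) := by unfold edgeNe; infer_instance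

def validB (l : List M4) : Bool :=
  l.all (fun m => m.1 != m.2) &&
  decide (l.Pairwise edgeNe) &&
  (List.zipWith (fun a b => a.2 == b.1) l (l.drop 2)).all id

def tbl : List (List M4 × M4) := [
  ([], (0,1)),
  ([(0,1), (0,2)], (1,3)),
  ([(0,1), (0,2), (1,3), (2,1)], (3,0)),
  ([(0,1), (0,2), (1,3), (2,3)], (3,0)),
  ([(0,1), (0,3)], (1,2)),
  ([(0,1), (0,3), (1,2), (3,1)], (2,0)),
  ([(0,1), (0,3), (1,2), (3,2)], (2,0)),
  ([(0,1), (1,2)], (1,3)),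
  ([(0,1), (1,2), (1,3), (2,0)], (3,0)),
  ([(0,1), (1,2), (1,3), (2,3)], (3,0)),
  ([(0,1), (1,3)], (1,2)),
  ([(0,1), (1,3), (1,2), (3,0)], (2,0)),
  ([(0,1), (1,3), (1,2), (3,2)], (2,0)),
  ([(0,1), (2,0)], (1,3)),
  ([(0,1), (2,0), (1,3), (0,3)], (3,2)),
  ([(0,1), (2,1)], (1,3)),
  ([(0,1), (2,3)], (1,2)),
  ([(0,1), (2,3), (1,2), (3,0)], (2,0)),
  ([(0,1), (2,3), (1,2), (3,1)], (2,0)),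
  ([(0,1), (3,0)], (1,2)),
  ([(0,1), (3,0), (1,2), (0,2)], (2,3)),
  ([(0,1), (3,1)], (1,2)),
  ([(0,1), (3,2)], (1,3)),
  ([(0,1), (3,2), (1,3), (2,0)], (3,0)),
  ([(0,1), (3,2), (1,3), (2,1)], (3,0))]

def sig (l : List M4) : M4 := (tbl.lookup l).getD (0,1)

def step (l : List M4) : List (List M4) :=
  if l.length % 2 = 0 then
    if validB (l ++ [sig l]) then [l ++ [sig l]] else []
  else
    (movesList.filter (fun m => validB (l ++ [m]))).map (fun m => l ++ [m])

def plays : ℕ → List (List M4)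
  | 0 => [[]]
  | n+1 => (plays n).flatMap step

lemma edgeNe_iff (a b : M4) : edgeNe a b ↔ s(a.1, a.2) ≠ s(b.1, b.2) := by
  unfold edgeNe
  rw [ne_eq, Sym2.eq_iff, Prod.ext_iff]

lemma zip_iff (l : List M4) :
    ((List.zipWith (fun a b => a.2 == b.1) l (l.drop 2)).all id = true) ↔
    ∀ (i : ℕ) (h : i + 2 < l.length),
      (l.get ⟨i + 2, h⟩).1 = (l.get ⟨i, by omega⟩).2 := by
  rw [List.all_eq_true]
  constructor
  · intro H i h
    have hlen : i < (List.zipWith (fun a b : M4 => a.2 == b.1) l (l.drop 2)).length := by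
      rw [List.length_zipWith, List.length_drop]; omega
    have := H _ (List.getElem_mem hlen)
    rw [List.getElem_zipWith] at this
    simp only [id_eq, beq_iff_eq] at this
    have hd : (l.drop 2)[i]'(by rw [List.length_drop]; omega) = l[2 + i]'(by omega) :=
      List.getElem_drop ..
    rw [hd] at this
    simp only [List.get_eq_getElem]
    have hswap : l[2 + i]'(by omega) = l[i + 2]'(by omega) := by congr 1; omega
    rw [hswap] at this
    exact this.symm
  · intro H x hx
    rw [List.mem_iff_getElem] at hx
    obtain ⟨i, hi, rfl⟩ := hx
    rw [List.length_zipWith, List.length_drop] at hi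
    have h2 : i + 2 < l.length := by omega
    have := H i h2
    simp only [List.get_eq_getElem] at this
    rw [List.getElem_zipWith]
    have hd : (l.drop 2)[i]'(by rw [List.length_drop]; omega) = l[2 + i]'(by omega) :=
      List.getElem_drop ..
    rw [hd]
    simp only [id_eq, beq_iff_eq]
    have hswap : l[2 + i]'(by omega) = l[i + 2]'(by omega) := by congr 1; omega
    rw [hswap]
    exact this.symm

lemma validB_iff (l : List M4) :
    validB l = true ↔ ValidPlay (⊤ : SimpleGraph (Fin 4)) l := by
  unfold validB ValidPlay
  rw [Bool.and_eq_true, Bool.and_eq_true]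
  rw [zip_iff]
  simp only [List.all_eq_true, bne_iff_ne, ne_eq, decide_eq_true_eq, top_adj]
  constructor
  · rintro ⟨⟨h1, h2⟩, h3⟩
    refine ⟨h1, ?_, h3⟩
    rw [List.Nodup, List.pairwise_map]
    exact h2.imp (fun h => (edgeNe_iff _ _).1 h)
  · rintro ⟨h1, h2, h3⟩
    refine ⟨⟨h1, ?_⟩, h3⟩
    rw [List.Nodup, List.pairwise_map] at h2
    exact h2.imp (fun h => (edgeNe_iff _ _).2 h)

lemma mem_movesList (m : M4) (h : m.1 ≠ m.2) : m ∈ movesList := by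
  revert h
  exact (by decide : ∀ m : M4, m.1 ≠ m.2 → m ∈ movesList) m

lemma validPlay_of_append {m : M4} {l : List M4}
    (h : ValidPlay (⊤ : SimpleGraph (Fin 4)) (l ++ [m])) :
    ValidPlay (⊤ : SimpleGraph (Fin 4)) l := by
  obtain ⟨h1, h2, h3⟩ := h
  refine ⟨fun x hx => h1 x (List.mem_append_left _ hx), ?_, ?_⟩
  · rw [List.map_append] at h2
    exact (List.Nodup.of_append_left h2)
  · intro i hi
    have hi' : i + 2 < (l ++ [m]).length := by
      rw [List.length_append]; simp; omega
    have := h3 i hi'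
    simp only [List.get_eq_getElem] at this ⊢
    rwa [List.getElem_append_left hi, List.getElem_append_left (by omega)] at this

lemma followsAt_of_append {σ : List M4 → M4} {m : M4} {l : List M4}
    (h : FollowsAt σ 0 (l ++ [m])) : FollowsAt σ 0 l := by
  intro i hi ht
  have hi' : i < (l ++ [m]).length := by rw [List.length_append]; omega
  have := h i hi' ht
  simp only [List.get_eq_getElem] at this ⊢
  rwa [List.getElem_append_left hi, List.take_append_of_le_length (by omega)] at this

lemma complete : ∀ l : List M4, ValidPlay (⊤ : SimpleGraph (Fin 4)) l →
    FollowsAt sig 0 l → l ∈ plays l.length := by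
  intro l
  induction l using List.reverseRecOn with
  | nil => intro _ _; simp [plays]
  | append_singleton l m ih =>
    intro hv hf
    have hv' := validPlay_of_append hv
    have hf' := followsAt_of_append hf
    have hmem := ih hv' hf'
    have hlen : (l ++ [m]).length = l.length + 1 := by simp
    rw [hlen]
    show l ++ [m] ∈ plays (l.length + 1)
    rw [plays, List.mem_flatMap]
    refine ⟨l, hmem, ?_⟩
    have hvB : validB (l ++ [m]) = true := (validB_iff _).2 hv
    unfold step
    by_cases hpar : l.length % 2 = 0
    · rw [if_pos hpar]
      have hget : (l ++ [m]).get ⟨l.length, by simp⟩ = m := by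
        simp only [List.get_eq_getElem]
        rw [List.getElem_concat_length]
        rfl
      have hsig := hf l.length (by simp) hpar
      rw [hget, List.take_left] at hsig
      rw [hsig] at hvB
      rw [if_pos hvB, hsig]
      simp
    · rw [if_neg hpar]
      have hm1 : m.1 ≠ m.2 := by
        have := hv.1 m (by simp)
        simpa using this
      simp only [List.mem_map, List.mem_filter]
      exact ⟨m, ⟨mem_movesList m hm1, hvB⟩, rfl⟩

lemma plays6 : plays 6 = [] := by decide

lemma plays_big (n : ℕ) (h : 6 ≤ n) : plays n = [] := by
  induction n with
  | zero => omega
  | succ k ih =>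
    rcases Nat.lt_or_ge k 6 with hk | hk
    · have : k = 5 := by omega
      subst this
      exact plays6
    · rw [plays, ih hk]; rfl

lemma good_even : ∀ l ∈ plays 0 ++ plays 2 ++ plays 4,
    validB (l ++ [sig l]) = true := by decide

lemma key (l : List M4) (hv : ValidPlay (⊤ : SimpleGraph (Fin 4)) l)
    (hf : FollowsAt sig 0 l) (he : l.length % 2 = 0) :
    ValidPlay (⊤ : SimpleGraph (Fin 4)) (l ++ [sig l]) ∧
      FollowsAt sig 0 (l ++ [sig l]) := by
  have hmem := complete l hv hf
  have hlt : l.length < 6 := by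
    by_contra hge
    rw [plays_big _ (by omega)] at hmem
    exact absurd hmem (List.not_mem_nil (a := l))
  have hB : validB (l ++ [sig l]) = true := by
    apply good_even
    have : l.length = 0 ∨ l.length = 2 ∨ l.length = 4 := by omega
    rcases this with h | h | h <;> rw [h] at hmem <;>
      simp only [List.mem_append] <;> tauto
  refine ⟨(validB_iff _).1 hB, ?_⟩
  intro i hi ht
  rw [List.length_append, List.length_singleton] at hi
  rcases Nat.lt_or_ge i l.length with hil | hil
  · have := hf i hil ht
    simp only [List.get_eq_getElem] at this ⊢
    rwa [List.getElem_append_left hil, List.take_append_of_le_length (by omega)]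
  · have hieq : i = l.length := by omega
    subst hieq
    simp only [List.get_eq_getElem]
    rw [List.getElem_concat_length rfl, List.take_left]

theorem stmt_6 : P1Win (⊤ : SimpleGraph (Fin 4)) := by
  refine ⟨sig, fun l hv hf hmax => ?_⟩
  by_contra hne
  have he : l.length % 2 = 0 := by omega
  obtain ⟨h1, h2⟩ := key l hv hf he
  exact hmax (sig l) ⟨h1, h2⟩
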